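/- Let n ≥ 2 be an integer and Ψ_n(t) = (t^{n+4} − 1)/((n+3)(n+4)) + t²(t^n − 1)/(n(n+1)) − 2t(t^{n+2} − 1)/((n+1)(n+3)). Then Ψ_n(t) > 0 for all real t > 1. -/

import Mathlib

theorem stmt_3 (n : ℕ) (hn : 2 ≤ n)
    (Ψ : ℝ → ℝ)
    (hΨ : ∀ t : ℝ, Ψ t = (1 / ((n + 3) * (n + 4))) * (t ^ (n + 4) - 1)
      + (1 / (n * (n + 1))) * t ^ 2 * (t ^ n - 1)
      - (2 / ((n + 1) * (n + 3))) * t * (t ^ (n + 2) - 1)) :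
    ∀ t : ℝ, 1 < t → 0 < Ψ t := by
  obtain ⟨m, rfl⟩ : ∃ m, n = 2 + m := ⟨n - 2, by omega⟩
  intro t ht
  set M : ℝ := (m : ℝ) with hMdef
  have hM : (0:ℝ) ≤ M := Nat.cast_nonneg m
  set P : ℝ → ℝ := fun x => (M+2)*(M+3)*x^(m+6) + (M+5)*(M+6)*x^(m+4)
      - 2*(M+2)*(M+6)*x^(m+5) - (M+5)*(M+6)*x^2 + 2*(M+2)*(M+6)*x
      - (M+2)*(M+3) with hP
  set P1 : ℝ → ℝ := fun x => (M+6)*((M+2)*(M+3)*x^(m+5) + (M+4)*(M+5)*x^(m+3)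
      - 2*(M+2)*(M+5)*x^(m+4) - 2*(M+5)*x + 2*(M+2)) with hP1
  set P2 : ℝ → ℝ := fun x => (M+6)*(M+5)*((M+2)*(M+3)*x^(m+4)
      + (M+3)*(M+4)*x^(m+2) - 2*(M+2)*(M+4)*x^(m+3) - 2) with hP2
  have hd0 : ∀ x : ℝ, HasDerivAt P (P1 x) x := by
    intro x
    have h := ((((((hasDerivAt_pow (m+6) x).const_mul ((M+2)*(M+3))).add
      ((hasDerivAt_pow (m+4) x).const_mul ((M+5)*(M+6)))).sub
      ((hasDerivAt_pow (m+5) x).const_mul (2*(M+2)*(M+6)))).sub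
      ((hasDerivAt_pow 2 x).const_mul ((M+5)*(M+6)))).add
      (((hasDerivAt_id x).const_mul (2*(M+2)*(M+6))).sub
        (hasDerivAt_const x ((M+2)*(M+3)))))
    convert h using 1
    · rfl
    · rfl
    · rw [hP]; funext y; simp only [id, Pi.add_apply, Pi.sub_apply]; ring
    · rw [hP1]; push_cast; ring
  have hd1 : ∀ x : ℝ, HasDerivAt P1 (P2 x) x := by
    intro x
    have h := (((((hasDerivAt_pow (m+5) x).const_mul ((M+2)*(M+3))).add
      ((hasDerivAt_pow (m+3) x).const_mul ((M+4)*(M+5)))).sub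
      ((hasDerivAt_pow (m+4) x).const_mul (2*(M+2)*(M+5)))).add
      (((hasDerivAt_id x).const_mul (-2*(M+5))).add
        (hasDerivAt_const x (2*(M+2))))).const_mul (M+6)
    convert h using 1
    · rfl
    · rfl
    · rw [hP1]; funext y; simp only [id, Pi.add_apply, Pi.sub_apply]; ring
    · rw [hP2]; push_cast; ring
  have hd2 : ∀ x : ℝ, HasDerivAt P2
      ((M+2)*(M+3)*(M+4)*(M+5)*(M+6) * (x^(m+1)*(x-1)^2)) x := by
    intro x
    have h := ((((hasDerivAt_pow (m+4) x).const_mul ((M+2)*(M+3))).add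
      ((hasDerivAt_pow (m+2) x).const_mul ((M+3)*(M+4)))).sub
      (((hasDerivAt_pow (m+3) x).const_mul (2*(M+2)*(M+4))).add
        (hasDerivAt_const x 2))).const_mul ((M+6)*(M+5))
    convert h using 1
    · rfl
    · rfl
    · rw [hP2]; funext y; simp only [Pi.add_apply, Pi.sub_apply]; ring
    · push_cast; ring
  -- P2 is strictly monotone on [1, ∞), P2 1 = 0
  have hm2 : StrictMonoOn P2 (Set.Ici 1) := by
    apply strictMonoOn_of_deriv_pos (convex_Ici 1)
    · exact (HasDerivAt.continuousOn (fun x _ => hd2 x))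
    · intro x hx
      rw [interior_Ici] at hx
      rw [(hd2 x).deriv]
      have hx0 : (0:ℝ) < x := by have : (1:ℝ) < x := hx; linarith
      have : (0:ℝ) < x - 1 := by have : (1:ℝ) < x := hx; linarith
      positivity
  have h21 : P2 1 = 0 := by rw [hP2]; simp only [one_pow]; ring
  have hP2pos : ∀ x : ℝ, 1 < x → 0 < P2 x := by
    intro x hx
    have := hm2 Set.self_mem_Ici (le_of_lt hx) hx
    rwa [h21] at this
  -- P1 strictly monotone on [1, ∞), P1 1 = 0
  have hm1 : StrictMonoOn P1 (Set.Ici 1) := by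
    apply strictMonoOn_of_deriv_pos (convex_Ici 1)
    · exact (HasDerivAt.continuousOn (fun x _ => hd1 x))
    · intro x hx
      rw [interior_Ici] at hx
      rw [(hd1 x).deriv]
      exact hP2pos x hx
  have h11 : P1 1 = 0 := by rw [hP1]; simp only [one_pow]; ring
  have hP1pos : ∀ x : ℝ, 1 < x → 0 < P1 x := by
    intro x hx
    have := hm1 Set.self_mem_Ici (le_of_lt hx) hx
    rwa [h11] at this
  -- P strictly monotone on [1, ∞), P 1 = 0
  have hm0 : StrictMonoOn P (Set.Ici 1) := by
    apply strictMonoOn_of_deriv_pos (convex_Ici 1)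
    · exact (HasDerivAt.continuousOn (fun x _ => hd0 x))
    · intro x hx
      rw [interior_Ici] at hx
      rw [(hd0 x).deriv]
      exact hP1pos x hx
  have h01 : P 1 = 0 := by rw [hP]; simp only [one_pow]; ring
  have hPt : 0 < P t := by
    have := hm0 Set.self_mem_Ici (le_of_lt ht) ht
    rwa [h01] at this
  -- relate Ψ t and P t
  have e2 : M + 2 ≠ 0 := by positivity
  have e3 : M + 3 ≠ 0 := by positivity
  have e5 : M + 5 ≠ 0 := by positivity
  have e6 : M + 6 ≠ 0 := by positivity
  have hΨt : Ψ t = P t / ((M+2)*(M+3)*(M+5)*(M+6)) := by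
    rw [hΨ t, hP]
    push_cast
    field_simp
    ring
  rw [hΨt]
  exact div_pos hPt (by positivity)
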